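/- arXiv:2402.08248 — 2 statements merged into one kernel-verified Lean document; each statement's English description precedes it below -/
import Mathlib

section
/- Let W_n (n ≥ 3) be the wheel graph. Then RL1(W_n) = n(n^2 + 3n + 36), RL2(W_n) = n(n^2 − 3n + 18), RL3(W_n) = 2n(2n + 3), and RL4(W_n) = 3n^2 |n − 3|. -/
open Finset SimpleGraph

variable {V : Type*}

/-- The degree of a vertex, as a real number. -/
noncomputable def deg [Fintype V] (G : SimpleGraph V) (v : V) : ℝ :=
  haveI := Classical.decEq V
  haveI : DecidableRel G.Adj := Classical.decRel _
  (G.degree v : ℝ)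

/-- Sum of a symmetric function of the two endpoints, over the edges of `G`
(each edge counted once). -/
noncomputable def edgeSum [Fintype V] (G : SimpleGraph V)
    (f : V → V → ℝ) (hf : ∀ u v, f u v = f v u) : ℝ :=
  haveI := Classical.decEq V
  haveI : DecidableRel G.Adj := Classical.decRel _
  ∑ e ∈ G.edgeFinset, Sym2.lift ⟨f, hf⟩ e

/-- The first Rehan–Lanel index: `RL₁(G) = Σ_{uv∈E(G)} (d(u)² + d(v)² + d(u)d(v))`. -/
noncomputable def RL1 [Fintype V] (G : SimpleGraph V) : ℝ :=
  edgeSum G (fun u v => deg G u ^ 2 + deg G v ^ 2 + deg G u * deg G v)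
    (fun u v => by ring)

/-- The second Rehan–Lanel index: `RL₂(G) = Σ_{uv∈E(G)} (d(u)² + d(v)² − d(u)d(v))`. -/
noncomputable def RL2 [Fintype V] (G : SimpleGraph V) : ℝ :=
  edgeSum G (fun u v => deg G u ^ 2 + deg G v ^ 2 - deg G u * deg G v)
    (fun u v => by ring)

/-- The third Rehan–Lanel index: `RL₃(G) = Σ_{uv∈E(G)} (|d(u) − d(v)| + d(u)d(v))`. -/
noncomputable def RL3 [Fintype V] (G : SimpleGraph V) : ℝ :=
  edgeSum G (fun u v => |deg G u - deg G v| + deg G u * deg G v)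
    (fun u v => by (try dsimp only); rw [abs_sub_comm]; ring)

/-- The fourth Rehan–Lanel index: `RL₄(G) = Σ_{uv∈E(G)} |d(u) − d(v)|·d(u)d(v)`. -/
noncomputable def RL4 [Fintype V] (G : SimpleGraph V) : ℝ :=
  edgeSum G (fun u v => |deg G u - deg G v| * (deg G u * deg G v))
    (fun u v => by (try dsimp only); rw [abs_sub_comm]; ring)

/-- The wheel graph `Wₙ`: the join of a single hub vertex (`none`) with the
cycle `Cₙ` (on the vertices `some i`). -/
def wheelGraph (n : ℕ) : SimpleGraph (Option (Fin n)) :=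
  SimpleGraph.fromRel (fun u v =>
    u = none ∨ ∃ i j, u = some i ∧ v = some j ∧ (SimpleGraph.cycleGraph n).Adj i j)

lemma wheel_adj_none {n : ℕ} {v : Option (Fin n)} :
    (wheelGraph n).Adj none v ↔ v ≠ none := by
  simp [wheelGraph, eq_comm]

lemma wheel_adj_some {n : ℕ} {i j : Fin n} :
    (wheelGraph n).Adj (some i) (some j) ↔ (SimpleGraph.cycleGraph n).Adj i j := by
  constructor
  · rintro ⟨hne, h | h⟩
    · rcases h with h | ⟨a, b, ha, hb, hab⟩
      · exact absurd h (by simp)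
      · cases ha; cases hb; exact hab
    · rcases h with h | ⟨a, b, ha, hb, hab⟩
      · exact absurd h (by simp)
      · cases ha; cases hb; exact hab.symm
  · intro h
    exact ⟨by simpa using h.ne, Or.inl (Or.inr ⟨i, j, rfl, rfl, h⟩)⟩

lemma wheel_degree_none {n : ℕ} {inst : Fintype ((wheelGraph n).neighborSet none)} :
    @SimpleGraph.degree _ (wheelGraph n) none inst = n := by
  classical
  have h : (wheelGraph n).neighborFinset none = Finset.univ.erase none := by
    ext v
    simp [mem_neighborFinset, wheel_adj_none]
  rw [← SimpleGraph.card_neighborFinset_eq_degree, h, Finset.card_erase_of_mem (Finset.mem_univ _)]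
  simp

lemma wheel_degree_some {n : ℕ} (hn : 3 ≤ n) (i : Fin n)
    {inst : Fintype ((wheelGraph n).neighborSet (some i))} :
    @SimpleGraph.degree _ (wheelGraph n) (some i) inst = 3 := by
  classical
  obtain ⟨m, rfl⟩ : ∃ m, n = m + 3 := ⟨n - 3, by omega⟩
  have h : (wheelGraph (m + 3)).neighborFinset (some i) =
      insert none (((SimpleGraph.cycleGraph (m + 3)).neighborFinset i).image some) := by
    ext v
    cases v with
    | none =>
        simp [mem_neighborFinset, (wheelGraph (m+3)).adj_comm, wheel_adj_none]
    | some j =>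
        simp [mem_neighborFinset, wheel_adj_some]
  rw [← SimpleGraph.card_neighborFinset_eq_degree, h,
    Finset.card_insert_of_notMem (by simp),
    Finset.card_image_of_injective _ (Option.some_injective _)]
  have := SimpleGraph.cycleGraph_degree_three_le (n := m) (v := i)
  rw [← SimpleGraph.card_neighborFinset_eq_degree] at this
  rw [this]

lemma wheel_card_edges {n : ℕ} (hn : 3 ≤ n) {inst : Fintype (wheelGraph n).edgeSet} :
    (@SimpleGraph.edgeFinset _ (wheelGraph n) inst).card = 2 * n := by
  classical
  have h := SimpleGraph.sum_degrees_eq_twice_card_edges (wheelGraph n)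
  rw [Fintype.sum_option] at h
  rw [wheel_degree_none, Finset.sum_congr rfl (fun i _ => wheel_degree_some hn i),
    Finset.sum_const, Finset.card_univ, Fintype.card_fin, smul_eq_mul] at h
  have hb : ∀ (i1 i2 : Fintype (wheelGraph n).edgeSet),
      @Fintype.card _ i1 = @Fintype.card _ i2 :=
    fun i1 i2 => @Fintype.card_congr' _ _ i1 i2 rfl
  simp only [SimpleGraph.edgeFinset_card] at h ⊢
  rw [hb _ inst] at h
  omega

lemma wheel_deg_none {n : ℕ} : deg (wheelGraph n) none = n := by
  rw [deg]
  exact_mod_cast congrArg (Nat.cast : ℕ → ℝ) wheel_degree_none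

lemma wheel_deg_some {n : ℕ} (hn : 3 ≤ n) (i : Fin n) :
    deg (wheelGraph n) (some i) = 3 := by
  rw [deg]
  exact_mod_cast congrArg (Nat.cast : ℕ → ℝ) (wheel_degree_some hn i)

lemma wheel_edgeSum {n : ℕ} (hn : 3 ≤ n)
    (f : Option (Fin n) → Option (Fin n) → ℝ) (hf : ∀ u v, f u v = f v u)
    (A B : ℝ) (hA : ∀ i : Fin n, f none (some i) = A)
    (hB : ∀ i j : Fin n, (SimpleGraph.cycleGraph n).Adj i j → f (some i) (some j) = B) :
    edgeSum (wheelGraph n) f hf = n * A + n * B := by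
  classical
  rw [edgeSum]
  set G := wheelGraph n with hG
  rw [← Finset.sum_filter_add_sum_filter_not G.edgeFinset (fun e => none ∈ e)
    (Sym2.lift ⟨f, hf⟩)]
  have hS : G.edgeFinset.filter (fun e => none ∈ e) =
      (Finset.univ : Finset (Fin n)).image (fun i => s((none : Option (Fin n)), some i)) := by
    ext e
    simp only [Finset.mem_filter, mem_edgeFinset, Finset.mem_image, Finset.mem_univ, true_and]
    constructor
    · rintro ⟨he, hne⟩
      obtain ⟨v, rfl⟩ := (Sym2.mem_iff_exists (x := (none : Option (Fin n))) (z := e)).mp hne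
      have hadj : G.Adj none v := (SimpleGraph.mem_edgeSet G).mp he
      obtain ⟨i, rfl⟩ := Option.ne_none_iff_exists'.mp (wheel_adj_none.mp hadj)
      exact ⟨i, rfl⟩
    · rintro ⟨i, rfl⟩
      exact ⟨(SimpleGraph.mem_edgeSet G).mpr (wheel_adj_none.mpr (by simp)), by simp⟩
  have hScard : (G.edgeFinset.filter (fun e => none ∈ e)).card = n := by
    rw [hS, Finset.card_image_of_injective _ (fun a b hab => by
      simpa using Sym2.congr_right.mp hab), Finset.card_univ, Fintype.card_fin]
  have hRcard : (G.edgeFinset.filter (fun e => ¬ none ∈ e)).card = n := by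
    have h2 := Finset.card_filter_add_card_filter_not
      (s := G.edgeFinset) (p := fun e => none ∈ e)
    rw [wheel_card_edges hn] at h2
    omega
  have hSsum : ∑ e ∈ G.edgeFinset.filter (fun e => none ∈ e), Sym2.lift ⟨f, hf⟩ e
      = n * A := by
    rw [Finset.sum_congr rfl (fun e he => ?_), Finset.sum_const, hScard, nsmul_eq_mul]
    rw [hS] at he
    obtain ⟨i, -, rfl⟩ := Finset.mem_image.mp he
    simpa using hA i
  have hRsum : ∑ e ∈ G.edgeFinset.filter (fun e => ¬ none ∈ e), Sym2.lift ⟨f, hf⟩ e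
      = n * B := by
    rw [Finset.sum_congr rfl (fun e he => ?_), Finset.sum_const, hRcard, nsmul_eq_mul]
    obtain ⟨he, hne⟩ := Finset.mem_filter.mp he
    induction e using Sym2.ind with
    | _ u v =>
      obtain ⟨i, rfl⟩ := Option.ne_none_iff_exists'.mp
        (show u ≠ none from fun h => hne (by simp [h]))
      obtain ⟨j, rfl⟩ := Option.ne_none_iff_exists'.mp
        (show v ≠ none from fun h => hne (by simp [h]))
      have hadj : G.Adj (some i) (some j) := SimpleGraph.mem_edgeFinset.mp he
      simpa using hB i j (wheel_adj_some.mp hadj)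
  rw [hSsum, hRsum]

/-- For the wheel graph `Wₙ` (`n ≥ 3`):
`RL₁ = n(n² + 3n + 36)`, `RL₂ = n(n² − 3n + 18)`,
`RL₃ = 2n(2n + 3)`, `RL₄ = 3n²|n − 3|`. -/
theorem RL_wheelGraph (n : ℕ) (hn : 3 ≤ n) :
    RL1 (wheelGraph n) = n * ((n : ℝ) ^ 2 + 3 * n + 36) ∧
      RL2 (wheelGraph n) = n * ((n : ℝ) ^ 2 - 3 * n + 18) ∧
      RL3 (wheelGraph n) = 2 * n * (2 * (n : ℝ) + 3) ∧
      RL4 (wheelGraph n) = 3 * (n : ℝ) ^ 2 * |(n : ℝ) - 3| := by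
  have h3 : (3:ℝ) ≤ (n:ℝ) := by exact_mod_cast hn
  refine ⟨?_, ?_, ?_, ?_⟩
  · rw [RL1, wheel_edgeSum hn _ _ ((n:ℝ)^2 + 3^2 + (n:ℝ)*3) (3^2+3^2+3*3 : ℝ)
      (fun i => by rw [wheel_deg_none, wheel_deg_some hn])
      (fun i j _ => by rw [wheel_deg_some hn, wheel_deg_some hn])]
    ring
  · rw [RL2, wheel_edgeSum hn _ _ ((n:ℝ)^2 + 3^2 - (n:ℝ)*3) (3^2+3^2-3*3 : ℝ)
      (fun i => by rw [wheel_deg_none, wheel_deg_some hn])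
      (fun i j _ => by rw [wheel_deg_some hn, wheel_deg_some hn])]
    ring
  · rw [RL3, wheel_edgeSum hn _ _ (|(n:ℝ) - 3| + (n:ℝ)*3) (|(3:ℝ) - 3| + 3*3)
      (fun i => by rw [wheel_deg_none, wheel_deg_some hn])
      (fun i j _ => by rw [wheel_deg_some hn, wheel_deg_some hn])]
    rw [abs_of_nonneg (by linarith), sub_self, abs_zero]
    ring
  · rw [RL4, wheel_edgeSum hn _ _ (|(n:ℝ) - 3| * ((n:ℝ)*3)) (|(3:ℝ) - 3| * (3*3))
      (fun i => by rw [wheel_deg_none, wheel_deg_some hn])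
      (fun i j _ => by rw [wheel_deg_some hn, wheel_deg_some hn])]
    rw [sub_self, abs_zero]
    ring
end

section
/- Let K_{m,n} be the complete bipartite graph with parts of sizes m and n, where 1 ≤ m ≤ n and n ≥ 2. Then BRL1(K_{m,n}) = (m+n−2)^2 (m^2 + n^2 + mn)/(mn), BRL2(K_{m,n}) = (m+n−2)^2 (m^2 + n^2 − mn)/(mn), BRL3(K_{m,n}) = 2(m+n−2)(n−1), and BRL4(K_{m,n}) = (m+n−2)^3 (n−m)/(mn). -/
open Finset SimpleGraph

variable {V : Type*}

/-- The Banhatti degree of the endpoint `u` of an edge `uv`: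
`B(u) = (d(u) + d(v) − 2)/(n − d(u))` where `n` is the number of vertices. -/
noncomputable def bdeg [Fintype V] (G : SimpleGraph V) (u v : V) : ℝ :=
  (deg G u + deg G v - 2) / ((Fintype.card V : ℝ) - deg G u)

/-- The first Banhatti Rehan–Lanel index:
`BRL₁(G) = Σ_{uv∈E(G)} (B(u)² + B(v)² + B(u)B(v))`. -/
noncomputable def BRL1 [Fintype V] (G : SimpleGraph V) : ℝ :=
  edgeSum G (fun u v => bdeg G u v ^ 2 + bdeg G v u ^ 2 + bdeg G u v * bdeg G v u)
    (fun u v => by (try dsimp only); ring)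

/-- The second Banhatti Rehan–Lanel index:
`BRL₂(G) = Σ_{uv∈E(G)} (B(u)² + B(v)² − B(u)B(v))`. -/
noncomputable def BRL2 [Fintype V] (G : SimpleGraph V) : ℝ :=
  edgeSum G (fun u v => bdeg G u v ^ 2 + bdeg G v u ^ 2 - bdeg G u v * bdeg G v u)
    (fun u v => by (try dsimp only); ring)

/-- The third Banhatti Rehan–Lanel index:
`BRL₃(G) = Σ_{uv∈E(G)} (|B(u) − B(v)| + B(u)B(v))`. -/
noncomputable def BRL3 [Fintype V] (G : SimpleGraph V) : ℝ :=
  edgeSum G (fun u v => |bdeg G u v - bdeg G v u| + bdeg G u v * bdeg G v u)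
    (fun u v => by (try dsimp only); rw [abs_sub_comm]; ring)

/-- The fourth Banhatti Rehan–Lanel index:
`BRL₄(G) = Σ_{uv∈E(G)} |B(u) − B(v)|·B(u)B(v)`. -/
noncomputable def BRL4 [Fintype V] (G : SimpleGraph V) : ℝ :=
  edgeSum G (fun u v => |bdeg G u v - bdeg G v u| * (bdeg G u v * bdeg G v u))
    (fun u v => by (try dsimp only); rw [abs_sub_comm]; ring)

lemma cbg_deg_left (m n : ℕ) (a : Fin m) :
    deg (completeBipartiteGraph (Fin m) (Fin n)) (Sum.inl a) = n := by
  rw [deg]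
  norm_cast
  classical
  rw [SimpleGraph.degree]
  have : (completeBipartiteGraph (Fin m) (Fin n)).neighborFinset (Sum.inl a)
      = Finset.univ.map ⟨Sum.inr, Sum.inr_injective⟩ := by
    ext w
    cases w <;> simp [SimpleGraph.mem_neighborFinset]
  rw [this]; simp

lemma cbg_deg_right (m n : ℕ) (b : Fin n) :
    deg (completeBipartiteGraph (Fin m) (Fin n)) (Sum.inr b) = m := by
  rw [deg]
  norm_cast
  classical
  rw [SimpleGraph.degree]
  have : (completeBipartiteGraph (Fin m) (Fin n)).neighborFinset (Sum.inr b)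
      = Finset.univ.map ⟨Sum.inl, Sum.inl_injective⟩ := by
    ext w
    cases w <;> simp [SimpleGraph.mem_neighborFinset]
  rw [this]; simp

lemma edgeSum_cbg (m n : ℕ) (f : (Fin m ⊕ Fin n) → (Fin m ⊕ Fin n) → ℝ)
    (hf : ∀ u v, f u v = f v u) :
    edgeSum (completeBipartiteGraph (Fin m) (Fin n)) f hf
      = ∑ p : Fin m × Fin n, f (Sum.inl p.1) (Sum.inr p.2) := by
  rw [edgeSum, eq_comm]
  classical
  refine Finset.sum_bij (fun p _ => s(Sum.inl p.1, Sum.inr p.2)) ?_ ?_ ?_ ?_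
  · intro p _
    simp [SimpleGraph.mem_edgeFinset, SimpleGraph.mem_edgeSet]
  · intro p _ q _ h
    simp only [Sym2.eq, Sym2.rel_iff', Prod.mk.injEq, Sum.inl.injEq, Sum.inr.injEq,
      Prod.swap_prod_mk] at h
    rcases h with ⟨h1, h2⟩ | ⟨h1, h2⟩
    · exact Prod.ext h1 h2
    · exact absurd h1 (by simp)
  · intro e he
    induction e with
    | _ u v =>
      rw [SimpleGraph.mem_edgeFinset, SimpleGraph.mem_edgeSet] at he
      cases u with
      | inl a =>
        cases v with
        | inl a' => simp at he
        | inr b => exact ⟨(a, b), Finset.mem_univ _, rfl⟩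
      | inr b =>
        cases v with
        | inl a => exact ⟨(a, b), Finset.mem_univ _, by rw [Sym2.eq_swap]⟩
        | inr b' => simp at he
  · intro p _
    simp [Sym2.lift_mk]

lemma cbg_bdeg_left (m n : ℕ) (a : Fin m) (b : Fin n) :
    bdeg (completeBipartiteGraph (Fin m) (Fin n)) (Sum.inl a) (Sum.inr b)
      = ((m : ℝ) + n - 2) / m := by
  rw [bdeg, cbg_deg_left, cbg_deg_right, Fintype.card_sum, Fintype.card_fin, Fintype.card_fin]
  push_cast
  ring_nf

lemma cbg_bdeg_right (m n : ℕ) (a : Fin m) (b : Fin n) :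
    bdeg (completeBipartiteGraph (Fin m) (Fin n)) (Sum.inr b) (Sum.inl a)
      = ((m : ℝ) + n - 2) / n := by
  rw [bdeg, cbg_deg_left, cbg_deg_right, Fintype.card_sum, Fintype.card_fin, Fintype.card_fin]
  push_cast
  ring_nf

/-- For the complete bipartite graph `K_{m,n}` with `1 ≤ m ≤ n`, `n ≥ 2`:
`BRL₁ = (m+n−2)²(m² + n² + mn)/(mn)`, `BRL₂ = (m+n−2)²(m² + n² − mn)/(mn)`,
`BRL₃ = 2(m+n−2)(n−1)`, `BRL₄ = (m+n−2)³(n−m)/(mn)`. -/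
theorem BRL_completeBipartiteGraph (m n : ℕ) (hm : 1 ≤ m) (hmn : m ≤ n) (hn : 2 ≤ n) :
    BRL1 (completeBipartiteGraph (Fin m) (Fin n)) =
        ((m : ℝ) + n - 2) ^ 2 * ((m : ℝ) ^ 2 + (n : ℝ) ^ 2 + m * n) / (m * n) ∧
      BRL2 (completeBipartiteGraph (Fin m) (Fin n)) =
        ((m : ℝ) + n - 2) ^ 2 * ((m : ℝ) ^ 2 + (n : ℝ) ^ 2 - m * n) / (m * n) ∧
      BRL3 (completeBipartiteGraph (Fin m) (Fin n)) =
        2 * ((m : ℝ) + n - 2) * ((n : ℝ) - 1) ∧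
      BRL4 (completeBipartiteGraph (Fin m) (Fin n)) =
        ((m : ℝ) + n - 2) ^ 3 * ((n : ℝ) - m) / (m * n) := by
  have hm0 : (m : ℝ) ≠ 0 := Nat.cast_ne_zero.mpr (by omega)
  have hn0 : (n : ℝ) ≠ 0 := Nat.cast_ne_zero.mpr (by omega)
  have hm1 : (1 : ℝ) ≤ m := by exact_mod_cast hm
  have hmn' : (m : ℝ) ≤ n := by exact_mod_cast hmn
  have hc : ((m : ℝ) + n - 2) ≥ 0 := by
    have : (2 : ℝ) ≤ n := by exact_mod_cast hn
    linarith
  have habs : |((m : ℝ) + n - 2) / m - ((m : ℝ) + n - 2) / n|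
      = ((m : ℝ) + n - 2) / m - ((m : ℝ) + n - 2) / n := by
    apply abs_of_nonneg
    have h1 : ((m : ℝ) + n - 2) / n ≤ ((m : ℝ) + n - 2) / m :=
      div_le_div_of_nonneg_left hc (by linarith) hmn'
    linarith
  have hcard : ((Fintype.card (Fin m × Fin n)) : ℝ) = m * n := by
    rw [Fintype.card_prod, Fintype.card_fin, Fintype.card_fin]; push_cast; ring
  refine ⟨?_, ?_, ?_, ?_⟩ <;>
    [rw [BRL1]; rw [BRL2]; rw [BRL3]; rw [BRL4]] <;>
    rw [edgeSum_cbg] <;>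
    simp only [cbg_bdeg_left, cbg_bdeg_right, habs] <;>
    rw [Finset.sum_const, Finset.card_univ, nsmul_eq_mul, hcard] <;>
    field_simp <;>
    ring
end
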